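/- For every 0 ≤ i ≤ r−1, the formal derivative of W_i is the constant polynomial ∏_{j=1}^{2^i−1} ω_j (the product of all nonzero elements of the F₂-span of v_0, …, v_{i−1}, with the empty product for i = 0 equal to 1), and this constant is nonzero. -/

import Mathlib

open Polynomial Finset

attribute [local instance] ZMod.algebra

/-- `ω_i = Σ_{j<r} i_j · v_j`, where `i_j` are the binary digits of `i`. -/
noncomputable def omegaF {F : Type*} [Field F] {r : ℕ} (v : Fin r → F) (i : ℕ) : F :=
  ∑ j : Fin r, if Nat.testBit i (j : ℕ) then v j else 0

/-- The subspace vanishing polynomial `W_j(X) = ∏_{i=0}^{2^j-1} (X - ω_i)`. -/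
noncomputable def Wpoly {F : Type*} [Field F] {r : ℕ} (v : Fin r → F) (j : ℕ) : Polynomial F :=
  ∏ i ∈ Finset.range (2 ^ j), (Polynomial.X - Polynomial.C (omegaF v i))

/-- The basis polynomial `X_i(X) = ∏_{j<r} (W_j(X)/W_j(ω_{2^j}))^{i_j}`. -/
noncomputable def Xpoly {F : Type*} [Field F] {r : ℕ} (v : Fin r → F) (i : ℕ) : Polynomial F :=
  ∏ j ∈ Finset.range r,
    if Nat.testBit i j then
      Polynomial.C (((Wpoly v j).eval (omegaF v (2 ^ j)))⁻¹) * Wpoly v j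
    else 1

/-- The recursively defined polynomials `Δ_i^m`:
`Δ_t^m = C (d m)` and `Δ_i^m = Δ_{i+1}^m + (W_i/W_i(ω_{2^i})) · Δ_{i+1}^{m+2^i}` for `i < t`. -/
noncomputable def Delta {F : Type*} [Field F] {r : ℕ} (v : Fin r → F) (d : ℕ → F)
    (t i m : ℕ) : Polynomial F :=
  if i < t then
    Delta v d t (i + 1) m +
      Polynomial.C (((Wpoly v i).eval (omegaF v (2 ^ i)))⁻¹) * Wpoly v i *
        Delta v d t (i + 1) (m + 2 ^ i)
  else Polynomial.C (d m)
termination_by t - i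
decreasing_by all_goals omega

/-- The constant `W'_l = (∏_{j=1}^{2^l-1} ω_j) / W_l(ω_{2^l})`. -/
noncomputable def Wd {F : Type*} [Field F] {r : ℕ} (v : Fin r → F) (l : ℕ) : F :=
  (∏ j ∈ Finset.Ico 1 (2 ^ l), omegaF v j) / (Wpoly v l).eval (omegaF v (2 ^ l))

section Aux

variable {F : Type*} [Field F] {r : ℕ}

lemma omegaF_zero (v : Fin r → F) : omegaF v 0 = 0 := by
  simp [omegaF]

lemma omegaF_xor [CharP F 2] (v : Fin r → F) (a b : ℕ) :
    omegaF v (a ^^^ b) = omegaF v a + omegaF v b := by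
  unfold omegaF
  rw [← Finset.sum_add_distrib]
  refine Finset.sum_congr rfl fun j _ => ?_
  rw [Nat.testBit_xor]
  cases h1 : a.testBit (j : ℕ) <;> cases h2 : b.testBit (j : ℕ) <;>
    simp [CharTwo.add_self_eq_zero]

lemma omegaF_eq_zero [CharP F 2] {v : Fin r → F} (hv : LinearIndependent (ZMod 2) v)
    {n : ℕ} (hn : n < 2 ^ r) (h : omegaF v n = 0) : n = 0 := by
  have key := (Fintype.linearIndependent_iff.mp hv)
      (fun j => if n.testBit (j : ℕ) then 1 else 0) ?_
  · apply Nat.eq_of_testBit_eq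
    intro j
    by_cases hj : j < r
    · have hkj := key ⟨j, hj⟩
      simp only [Fin.val_mk] at hkj
      by_cases hb : n.testBit j
      · rw [if_pos hb] at hkj
        exact absurd hkj one_ne_zero
      · simp [Bool.eq_false_iff.mpr hb, Nat.zero_testBit]
    · rw [Nat.testBit_lt_two_pow
        (lt_of_lt_of_le hn (Nat.pow_le_pow_right (by norm_num) (le_of_not_gt hj)))]
      simp
  · rw [← h]
    unfold omegaF
    refine Finset.sum_congr rfl fun j _ => ?_
    by_cases hb : n.testBit (j : ℕ) <;> simp [hb]

lemma omegaF_inj [CharP F 2] {v : Fin r → F} (hv : LinearIndependent (ZMod 2) v)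
    {a b : ℕ} (ha : a < 2 ^ r) (hb : b < 2 ^ r) (h : omegaF v a = omegaF v b) : a = b := by
  have hx : a ^^^ b < 2 ^ r := Nat.bitwise_lt_two_pow ha hb
  have : omegaF v (a ^^^ b) = 0 := by
    rw [omegaF_xor, h, CharTwo.add_self_eq_zero]
  have := omegaF_eq_zero hv hx this
  exact xor_eq_zero_iff.mp this

end Aux

/-- For every `0 ≤ i ≤ r-1`, the formal derivative of `W_i` is the constant
polynomial `∏_{j=1}^{2^i-1} ω_j`, and this constant is nonzero. -/
theorem statement11 (r : ℕ) (hr : 1 ≤ r) (F : Type*) [Field F] [Fintype F] [CharP F 2]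
    (hcard : Fintype.card F = 2 ^ r) (v : Fin r → F)
    (hv : LinearIndependent (ZMod 2) v) (i : ℕ) (hi : i ≤ r - 1) :
    Polynomial.derivative (Wpoly v i) = Polynomial.C (∏ j ∈ Finset.Ico 1 (2 ^ i), omegaF v j)
      ∧ (∏ j ∈ Finset.Ico 1 (2 ^ i), omegaF v j) ≠ 0 := by
  classical
  have hir : i < r := by omega
  have hNr : 2 ^ i ≤ 2 ^ r := Nat.pow_le_pow_right (by norm_num) hir.le
  set N := 2 ^ i with hN
  set c : F := ∏ j ∈ Finset.Ico 1 N, omegaF v j with hc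
  -- nonvanishing of each ω_j for 1 ≤ j < N
  have homega_ne : ∀ w ∈ Finset.Ico 1 N, omegaF v w ≠ 0 := by
    intro w hw hzero
    rw [Finset.mem_Ico] at hw
    have : w = 0 := omegaF_eq_zero hv (lt_of_lt_of_le hw.2 hNr) hzero
    omega
  have hcne : c ≠ 0 := Finset.prod_ne_zero_iff.mpr homega_ne
  refine ⟨?_, hcne⟩
  -- Wpoly is the nodal polynomial
  have hW : Wpoly v i = Lagrange.nodal (Finset.range N) (omegaF v) := by
    rw [Lagrange.nodal_eq]; rfl
  -- evaluation of the derivative at each node equals c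
  have heval : ∀ k ∈ Finset.range N,
      (Polynomial.derivative (Wpoly v i)).eval (omegaF v k) = c := by
    intro k hk
    rw [Finset.mem_range] at hk
    rw [hW, Lagrange.eval_nodal_derivative_eval_node_eq (Finset.mem_range.mpr hk),
      Lagrange.eval_nodal]
    rw [hc]
    -- reindex the product via u ↦ k ^^^ u
    rw [show (∏ j ∈ Finset.Ico 1 N, omegaF v j) =
        ∏ u ∈ (Finset.range N).erase k, omegaF v (k ^^^ u) from ?_]
    · refine Finset.prod_congr rfl fun u hu => ?_
      rw [CharTwo.sub_eq_add, ← omegaF_xor]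
    · refine (Finset.prod_nbij' (fun u => k ^^^ u) (fun w => k ^^^ w) ?_ ?_ ?_ ?_ ?_).symm
      · intro u hu
        rw [Finset.mem_erase, Finset.mem_range] at hu
        rw [Finset.mem_Ico]
        refine ⟨?_, Nat.bitwise_lt_two_pow hk hu.2⟩
        show 1 ≤ k ^^^ u
        rcases Nat.eq_zero_or_pos (k ^^^ u) with h0 | h0
        · exact absurd (xor_eq_zero_iff.mp h0).symm hu.1
        · omega
      · intro w hw
        rw [Finset.mem_Ico] at hw
        rw [Finset.mem_erase, Finset.mem_range]
        constructor
        · intro hkw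
          have hkw' : k ^^^ w = k := hkw
          have : w = 0 := by
            have h2 := congrArg (fun x => k ^^^ x) hkw'
            simpa [← Nat.xor_assoc] using h2
          omega
        · exact Nat.bitwise_lt_two_pow hk (lt_of_lt_of_le hw.2 le_rfl)
      · intro a _; simp [← Nat.xor_assoc]
      · intro a _; simp [← Nat.xor_assoc]
      · intro u hu; rfl
  -- degree considerations
  have hdegW : (Wpoly v i).natDegree = N := by
    rw [hW, Lagrange.natDegree_nodal, Finset.card_range]
  set p := Polynomial.derivative (Wpoly v i) - Polynomial.C c with hp
  have hdegp : p.natDegree < N := by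
    have h1 : (Polynomial.derivative (Wpoly v i)).natDegree ≤ N - 1 := by
      rw [← hdegW]; exact Polynomial.natDegree_derivative_le _
    have h2 : p.natDegree ≤ N - 1 := by
      refine le_trans (Polynomial.natDegree_sub_le _ _) ?_
      simp only [Polynomial.natDegree_C]
      omega
    have hNpos : 0 < N := Nat.pow_pos (by norm_num)
    omega
  have hpzero : p = 0 := by
    refine Polynomial.eq_zero_of_natDegree_lt_card_of_eval_eq_zero' p
      ((Finset.range N).image (omegaF v)) ?_ ?_
    · intro x hx
      rw [Finset.mem_image] at hx
      obtain ⟨k, hk, rfl⟩ := hx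
      rw [hp]
      simp [heval k hk]
    · rwa [Finset.card_image_of_injOn (fun a ha b hb hab =>
        omegaF_inj hv (lt_of_lt_of_le (Finset.mem_range.mp ha) hNr)
          (lt_of_lt_of_le (Finset.mem_range.mp hb) hNr) hab), Finset.card_range]
  have := sub_eq_zero.mp hpzero
  exact this
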